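/- If S ⊆ Events(σ) is sync-preserving closed, then the sequence ρ obtained by listing the events of S in trace order of σ is a well-formed trace (obeys lock semantics), is a correct reordering of σ, and is sync-preserving with respect to σ. -/

import Mathlib

/- A model of concurrent program traces: events are read/write/acquire/release
operations performed by threads; a trace is a finite sequence of events,
identified by their indices. -/

inductive Op where
  | read  (x : ℕ)
  | write (x : ℕ)
  | acq (l : ℕ)
  | rel (l : ℕ)
deriving DecidableEq

structure Event where
  thread : ℕ
  op : Op
deriving DecidableEq

def evAt (σ : List Event) (i : ℕ) : Event := σ.getD i ⟨0, Op.read 0⟩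

def threadOf (σ : List Event) (i : ℕ) : ℕ := (evAt σ i).thread

def isAcq (σ : List Event) (l i : ℕ) : Prop := i < σ.length ∧ (evAt σ i).op = Op.acq l
def isRel (σ : List Event) (l i : ℕ) : Prop := i < σ.length ∧ (evAt σ i).op = Op.rel l
def isRead (σ : List Event) (x i : ℕ) : Prop := i < σ.length ∧ (evAt σ i).op = Op.read x
def isWrite (σ : List Event) (x i : ℕ) : Prop := i < σ.length ∧ (evAt σ i).op = Op.write x

/-- `e` is an event on lock `l` (an acquire or release of `l`). -/
def onLock (l : ℕ) (e : Event) : Bool := decide (e.op = Op.acq l ∨ e.op = Op.rel l)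

/-- Thread order: `i` and `j` are events of the same thread with `i` not after `j`. -/
def TO (σ : List Event) (i j : ℕ) : Prop :=
  i ≤ j ∧ j < σ.length ∧ threadOf σ i = threadOf σ j

/-- Alternating sequence of matched acquire/release pairs on lock `l`, each pair
performed by a single thread, with at most one unmatched acquire at the end. -/
inductive LockAlt (l : ℕ) : List Event → Prop
  | nil : LockAlt l []
  | pending (t : ℕ) : LockAlt l [⟨t, Op.acq l⟩]
  | pair (t : ℕ) {rest : List Event} : LockAlt l rest →
      LockAlt l (⟨t, Op.acq l⟩ :: ⟨t, Op.rel l⟩ :: rest)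

/-- Well-formedness of an event sequence: for each lock, the projection alternates
matched acquire/release pairs, with at most one pending acquire. -/
def WellFormedEvents (es : List Event) : Prop := ∀ l, LockAlt l (es.filter (onLock l))

/-- Words of the language `(Σ_t ⟨t, acq(l)⟩ · ⟨t, rel(l)⟩)*`. -/
inductive PairsLang (l : ℕ) : List Event → Prop
  | nil : PairsLang l []
  | pair (t : ℕ) {rest : List Event} : PairsLang l rest →
      PairsLang l (⟨t, Op.acq l⟩ :: ⟨t, Op.rel l⟩ :: rest)

/-- Lock semantics: for every lock `l`, the projection of the trace onto events on `l`
is a prefix of a word in the language `(Σ_t ⟨t, acq(l)⟩ · ⟨t, rel(l)⟩)*`. -/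
def LockSem (σ : List Event) : Prop :=
  ∀ l, ∃ w, PairsLang l w ∧ (σ.filter (onLock l)) <+: w

/-- Thread `t` holds lock `l` after the prefix of length `n`: the last event of the
prefix on lock `l` is an acquire of `l` by `t`. -/
def Holds (σ : List Event) (n t l : ℕ) : Prop :=
  ∃ i, i < n ∧ isAcq σ l i ∧ threadOf σ i = t ∧
    ∀ j, i < j → j < n → j < σ.length → onLock l (evAt σ j) = false

/-- `r` is the matching release of the acquire `a`: same thread, same lock, with no
intervening event on that lock in between. -/
def MatchRel (σ : List Event) (a r : ℕ) : Prop :=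
  ∃ l, isAcq σ l a ∧ isRel σ l r ∧ a < r ∧ threadOf σ a = threadOf σ r ∧
    ∀ k, a < k → k < r → ¬ (isAcq σ l k ∨ isRel σ l k)

/-- `i` is the last write (on the common variable) before the read `j` in `σ`. -/
def LastWrite (σ : List Event) (i j : ℕ) : Prop :=
  ∃ x, isWrite σ x i ∧ isRead σ x j ∧ i < j ∧ ∀ k, i < k → k < j → ¬ isWrite σ x k

/-- `i` is the immediate thread-order predecessor of `j` in `σ`. -/
def Prev (σ : List Event) (j i : ℕ) : Prop :=
  i < j ∧ j < σ.length ∧ threadOf σ i = threadOf σ j ∧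
    ∀ k, i < k → k < j → threadOf σ k ≠ threadOf σ j

/-- `S` is downward-closed with respect to thread order. -/
def TODownClosed (σ : List Event) (S : Set ℕ) : Prop :=
  ∀ i j, TO σ i j → j ∈ S → i ∈ S

/-- `S` is `(TO, lw)`-closed. -/
def TOLWClosed (σ : List Event) (S : Set ℕ) : Prop :=
  TODownClosed σ S ∧ ∀ i j, LastWrite σ i j → j ∈ S → i ∈ S

/-- `S` is sync-preserving closed. -/
def SPClosed (σ : List Event) (S : Set ℕ) : Prop :=
  TOLWClosed σ S ∧
    ∀ l a1 a2 r1, isAcq σ l a1 → isAcq σ l a2 → a1 < a2 →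
      a1 ∈ S → a2 ∈ S → MatchRel σ a1 r1 → r1 ∈ S

/-- The sync-preserving closure of `S`. -/
def SPClosure (σ : List Event) (S : Set ℕ) : Set ℕ :=
  ⋂₀ {S' : Set ℕ | S ⊆ S' ∧ SPClosed σ S'}

def PrevSet (σ : List Event) (j : ℕ) : Set ℕ := {i | Prev σ j i}

def SPIdeal (σ : List Event) (e1 e2 : ℕ) : Set ℕ :=
  SPClosure σ (PrevSet σ e1 ∪ PrevSet σ e2)

/-- `i` occurs before `j` in the reordering `ρ` (a list of σ-indices). -/
def RBefore (ρ : List ℕ) (i j : ℕ) : Prop :=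
  i ∈ ρ ∧ j ∈ ρ ∧ ρ.idxOf i < ρ.idxOf j

/-- `i` is the last write before the read `j` in the reordering `ρ`. -/
def LastWriteIn (σ : List Event) (ρ : List ℕ) (i j : ℕ) : Prop :=
  ∃ x, isWrite σ x i ∧ isRead σ x j ∧ RBefore ρ i j ∧
    ∀ k, isWrite σ x k → ¬ (RBefore ρ i k ∧ RBefore ρ k j)

/-- `ρ` (a duplicate-free list of σ-indices, read as a trace) is a correct reordering
of `σ`: a well-formed trace over a subset of events of `σ` that is downward-closed
under thread order, respects thread order, and in which every read observes the
same last write as in `σ`. -/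
def CorrectReordering (σ : List Event) (ρ : List ℕ) : Prop :=
  ρ.Nodup ∧ (∀ i ∈ ρ, i < σ.length) ∧
  WellFormedEvents (ρ.map (evAt σ)) ∧
  (∀ i j, TO σ i j → j ∈ ρ → i ∈ ρ) ∧
  (∀ i j, i ∈ ρ → j ∈ ρ → i ≠ j → TO σ i j → RBefore ρ i j) ∧
  (∀ j x, isRead σ x j → j ∈ ρ → ∀ i, LastWriteIn σ ρ i j ↔ LastWrite σ i j)

/-- Event `e` of `σ` is σ-enabled in the reordering `ρ`. -/
def EnabledIn (σ : List Event) (ρ : List ℕ) (e : ℕ) : Prop :=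
  e < σ.length ∧ e ∉ ρ ∧ ∀ i, i ≠ e → TO σ i e → i ∈ ρ

/-- `ρ` is sync-preserving w.r.t. `σ`: any two same-lock acquires occurring in `ρ`
appear in the same relative order as in `σ`. -/
def SyncPreserving (σ : List Event) (ρ : List ℕ) : Prop :=
  ∀ l a1 a2, isAcq σ l a1 → isAcq σ l a2 → a1 ∈ ρ → a2 ∈ ρ →
    (RBefore ρ a1 a2 ↔ a1 < a2)

/-- Conflicting events: different threads, common variable, at least one write. -/
def Conflict (σ : List Event) (i j : ℕ) : Prop :=
  i < σ.length ∧ j < σ.length ∧ threadOf σ i ≠ threadOf σ j ∧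
    ∃ x, (isWrite σ x i ∧ (isWrite σ x j ∨ isRead σ x j)) ∨
         (isRead σ x i ∧ isWrite σ x j)

/-- `(e1, e2)` is a sync-preserving race of `σ`. -/
def SPRace (σ : List Event) (e1 e2 : ℕ) : Prop :=
  Conflict σ e1 e2 ∧ ∃ ρ : List ℕ, CorrectReordering σ ρ ∧ SyncPreserving σ ρ ∧
    EnabledIn σ ρ e1 ∧ EnabledIn σ ρ e2

/-- Happens-before: smallest transitive relation containing thread order and
ordering each release of a lock before every later acquire of that lock. -/
inductive HB (σ : List Event) : ℕ → ℕ → Prop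
  | to {i j : ℕ} : TO σ i j → HB σ i j
  | relacq {l i j : ℕ} : isRel σ l i → isAcq σ l j → i < j → HB σ i j
  | trans {i j k : ℕ} : HB σ i j → HB σ j k → HB σ i k

/-- Schedulable-happens-before: smallest transitive relation containing HB and
ordering each write of a variable before every later read of that variable. -/
inductive SHB (σ : List Event) : ℕ → ℕ → Prop
  | hb {i j : ℕ} : HB σ i j → SHB σ i j
  | wr {x i j : ℕ} : isWrite σ x i → isRead σ x j → i < j → SHB σ i j
  | trans {i j k : ℕ} : SHB σ i j → SHB σ j k → SHB σ i k

/-! ### Auxiliary lemmas for stmt8 -/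

lemma map_evAt_range (σ : List Event) :
    (List.range σ.length).map (evAt σ) = σ := by
  apply List.ext_getElem
  · simp
  · intro i h1 h2
    simp [evAt, List.getElem?_eq_getElem h2]

lemma lockAlt_of_prefix {l : ℕ} : ∀ {w : List Event}, PairsLang l w →
    ∀ {P : List Event}, P <+: w → LockAlt l P := by
  intro w hw
  induction hw with
  | nil =>
    intro P hp
    simp only [List.prefix_nil] at hp
    subst hp; exact LockAlt.nil
  | pair t hrest ih =>
    intro P hp
    match P with
    | [] => exact LockAlt.nil
    | [e] =>
      rw [List.cons_prefix_cons] at hp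
      obtain ⟨rfl, -⟩ := hp
      exact LockAlt.pending t
    | e1 :: e2 :: P' =>
      rw [List.cons_prefix_cons] at hp
      obtain ⟨rfl, hp⟩ := hp
      rw [List.cons_prefix_cons] at hp
      obtain ⟨rfl, hp⟩ := hp
      exact LockAlt.pair t (ih hp)

lemma sorted_indexOf_lt {ρ : List ℕ} (hs : List.Pairwise (· < ·) ρ) {i j : ℕ}
    (hi : i ∈ ρ) (hj : j ∈ ρ) : ρ.idxOf i < ρ.idxOf j ↔ i < j := by
  have hI := List.idxOf_lt_length_iff.mpr hi
  have hJ := List.idxOf_lt_length_iff.mpr hj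
  have key : (⟨ρ.idxOf i, hI⟩ : Fin ρ.length) < ⟨ρ.idxOf j, hJ⟩ ↔
      ρ.get ⟨ρ.idxOf i, hI⟩ < ρ.get ⟨ρ.idxOf j, hJ⟩ :=
    (hs.sortedLT.strictMono_get.lt_iff_lt).symm
  rw [List.idxOf_get, List.idxOf_get] at key
  simpa [Fin.lt_def] using key

/-- In an alternating lock sequence where no acquire is in `S`, nothing is in `S`. -/
lemma noS_of_lockAlt {σ : List Event} {S : Set ℕ}
    (hTO : TODownClosed σ S) (l : ℕ) :
    ∀ {es : List Event}, LockAlt l es → ∀ L : List ℕ, es = L.map (evAt σ) →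
      List.Pairwise (· < ·) L → (∀ k ∈ L, k < σ.length) →
      (∀ k ∈ L, (evAt σ k).op = Op.acq l → k ∉ S) →
      ∀ k ∈ L, k ∉ S := by
  intro es hes
  induction hes with
  | nil =>
    intro L hL _ _ _ k hk
    rw [eq_comm, List.map_eq_nil_iff] at hL
    subst hL; simp at hk
  | pending t =>
    intro L hL _ _ hnoacq k hk
    rcases L with _ | ⟨a, _ | ⟨b, L'⟩⟩
    · simp at hL
    · simp only [List.map_cons, List.map_nil, List.cons.injEq] at hL
      simp only [List.mem_singleton] at hk
      subst hk
      exact hnoacq k (by simp) (by rw [← hL.1])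
    · simp at hL
  | pair t hrest ih =>
    intro L hL hsort hlt hnoacq k hk
    rcases L with _ | ⟨a, _ | ⟨r, L'⟩⟩
    · simp at hL
    · simp at hL
    · simp only [List.map_cons, List.cons.injEq] at hL
      obtain ⟨hA, hR, hL'⟩ := hL
      have har : a < r := (List.pairwise_cons.mp hsort).1 r (by simp)
      have hsort' := (List.pairwise_cons.mp (List.pairwise_cons.mp hsort).2).2
      simp only [List.mem_cons] at hk
      rcases hk with rfl | rfl | hk
      · exact hnoacq k (by simp) (by rw [← hA])
      · intro hkS
        have hTOar : TO σ a k :=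
          ⟨le_of_lt har, hlt k (by simp), by simp [threadOf, ← hA, ← hR]⟩
        exact hnoacq a (by simp) (by rw [← hA]) (hTO a k hTOar hkS)
      · exact ih L' hL' hsort' (fun m hm => hlt m (by simp [hm]))
          (fun m hm => hnoacq m (by simp [hm])) k hk

/-- Main lemma: filtering an alternating lock sequence by a sync-preserving
closed set yields an alternating lock sequence. -/
lemma lockAlt_filter {σ : List Event} {S : Set ℕ} [DecidablePred (· ∈ S)]
    (hTO : TODownClosed σ S)
    (hSP : ∀ l a1 a2 r1, isAcq σ l a1 → isAcq σ l a2 → a1 < a2 →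
      a1 ∈ S → a2 ∈ S → MatchRel σ a1 r1 → r1 ∈ S)
    (l : ℕ) :
    ∀ {es : List Event}, LockAlt l es → ∀ L : List ℕ, es = L.map (evAt σ) →
      List.Pairwise (· < ·) L → (∀ k ∈ L, k < σ.length) →
      (∀ k, k < σ.length → onLock l (evAt σ k) = true → (∃ m ∈ L, m ≤ k) → k ∈ L) →
      LockAlt l ((L.filter (fun i => decide (i ∈ S))).map (evAt σ)) := by
  intro es hes
  induction hes with
  | nil =>
    intro L hL _ _ _
    rw [eq_comm, List.map_eq_nil_iff] at hL
    subst hL; exact LockAlt.nil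
  | pending t =>
    intro L hL _ _ _
    rcases L with _ | ⟨a, _ | ⟨b, L'⟩⟩
    · simp at hL
    · simp only [List.map_cons, List.map_nil, List.cons.injEq] at hL
      by_cases haS : a ∈ S
      · simpa [haS, ← hL.1] using LockAlt.pending (l := l) t
      · simp [haS]; exact LockAlt.nil
    · simp at hL
  | pair t hrest ih =>
    intro L hL hsort hlt hup
    rcases L with _ | ⟨a, _ | ⟨r, L'⟩⟩
    · simp at hL
    · simp at hL
    · simp only [List.map_cons, List.cons.injEq] at hL
      obtain ⟨hA, hR, hL'⟩ := hL
      have har : a < r := (List.pairwise_cons.mp hsort).1 r (by simp)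
      have hsort' := (List.pairwise_cons.mp (List.pairwise_cons.mp hsort).2).2
      have hrL' : ∀ k ∈ L', r < k := (List.pairwise_cons.mp (List.pairwise_cons.mp hsort).2).1
      have haL' : ∀ k ∈ L', a < k := fun k hk => lt_trans har (hrL' k hk)
      have han : a < σ.length := hlt a (by simp)
      have hrn : r < σ.length := hlt r (by simp)
      have hAcq : isAcq σ l a := ⟨han, by rw [← hA]⟩
      have hRel : isRel σ l r := ⟨hrn, by rw [← hR]⟩
      have hthread : threadOf σ a = threadOf σ r := by simp [threadOf, ← hA, ← hR]
      have hlt' : ∀ k ∈ L', k < σ.length := fun m hm => hlt m (by simp [hm])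
      have hup' : ∀ k, k < σ.length → onLock l (evAt σ k) = true →
          (∃ m ∈ L', m ≤ k) → k ∈ L' := by
        intro k hkn hkl ⟨m, hm, hmk⟩
        have hkL : k ∈ a :: r :: L' := hup k hkn hkl ⟨m, by simp [hm], hmk⟩
        have hrk : r < k := lt_of_lt_of_le (hrL' m hm) hmk
        simp only [List.mem_cons] at hkL
        rcases hkL with rfl | rfl | hkL
        · omega
        · omega
        · exact hkL
      have hMatch : MatchRel σ a r := by
        refine ⟨l, hAcq, hRel, har, hthread, ?_⟩
        intro k hak hkr hk
        have hkn : k < σ.length := by rcases hk with h | h <;> exact h.1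
        have hkl : onLock l (evAt σ k) = true := by
          rcases hk with h | h <;> simp [onLock, h.2]
        have hkL : k ∈ a :: r :: L' := hup k hkn hkl ⟨a, by simp, le_of_lt hak⟩
        simp only [List.mem_cons] at hkL
        rcases hkL with rfl | rfl | hkL
        · omega
        · omega
        · exact absurd (hrL' k hkL) (by omega)
      by_cases hrS : r ∈ S
      · have haS : a ∈ S := hTO a r ⟨le_of_lt har, hrn, hthread⟩ hrS
        have : (a :: r :: L').filter (fun i => decide (i ∈ S)) =
            a :: r :: L'.filter (fun i => decide (i ∈ S)) := by
          simp [haS, hrS]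
        rw [this]
        simp only [List.map_cons, ← hA, ← hR]
        exact LockAlt.pair t (ih L' hL' hsort' hlt' hup')
      · by_cases haS : a ∈ S
        · have hnoacq : ∀ k ∈ L', (evAt σ k).op = Op.acq l → k ∉ S := by
            intro k hk hop hkS
            exact hrS (hSP l a k r hAcq ⟨hlt' k hk, hop⟩ (haL' k hk) haS hkS hMatch)
          have hnone : ∀ k ∈ L', k ∉ S :=
            noS_of_lockAlt hTO l hrest L' hL' hsort' hlt' hnoacq
          have hfil : L'.filter (fun i => decide (i ∈ S)) = [] :=
            List.filter_eq_nil_iff.mpr (fun k hk => by simp [hnone k hk])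
          have : (a :: r :: L').filter (fun i => decide (i ∈ S)) = [a] := by
            simp [haS, hrS, hfil]
          rw [this]
          simpa [← hA] using LockAlt.pending (l := l) t
        · have : (a :: r :: L').filter (fun i => decide (i ∈ S)) =
              L'.filter (fun i => decide (i ∈ S)) := by simp [haS, hrS]
          rw [this]
          exact ih L' hL' hsort' hlt' hup'

/-- Existence of a last write. -/
lemma exists_lastWrite {σ : List Event} {x j i₀ : ℕ} (hr : isRead σ x j)
    (hw : isWrite σ x i₀) (hij : i₀ < j) :
    ∃ lw, LastWrite σ lw j ∧ i₀ ≤ lw := by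
  classical
  set P : ℕ → Prop := fun k => k < j ∧ (evAt σ k).op = Op.write x with hP
  have hPi₀ : P i₀ := ⟨hij, hw.2⟩
  set lw := Nat.findGreatest P j with hlw
  have hspec : P lw := Nat.findGreatest_spec (le_of_lt hij) hPi₀
  have hle : i₀ ≤ lw := Nat.le_findGreatest (le_of_lt hij) hPi₀
  have hlwn : lw < σ.length := by
    by_contra h
    push_neg at h
    have hdef : evAt σ lw = ⟨0, Op.read 0⟩ := List.getD_eq_default _ _ h
    rw [hP] at hspec
    rw [hdef] at hspec
    exact absurd hspec.2 (by simp)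
  refine ⟨lw, ⟨x, ⟨hlwn, hspec.2⟩, hr, hspec.1, ?_⟩, hle⟩
  intro k h1 h2 hk
  exact Nat.findGreatest_is_greatest h1 (le_of_lt h2) ⟨h2, hk.2⟩

/-- if `S ⊆ Events(σ)` is sync-preserving closed, then listing the
events of `S` in trace order of `σ` yields a well-formed trace that is a
sync-preserving correct reordering of `σ`. -/
theorem stmt8 (σ : List Event) (hWF : LockSem σ) (S : Set ℕ)
    [DecidablePred (· ∈ S)] (hSub : ∀ i ∈ S, i < σ.length)
    (hcl : SPClosed σ S) :
    WellFormedEvents (((List.range σ.length).filter (fun i => decide (i ∈ S))).map (evAt σ)) ∧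
    CorrectReordering σ ((List.range σ.length).filter (fun i => decide (i ∈ S))) ∧
    SyncPreserving σ ((List.range σ.length).filter (fun i => decide (i ∈ S))) := by
  classical
  obtain ⟨⟨hTOc, hLWc⟩, hSPc⟩ := hcl
  set ρ := (List.range σ.length).filter (fun i => decide (i ∈ S)) with hρ
  have hmem : ∀ i, i ∈ ρ ↔ i < σ.length ∧ i ∈ S := by
    intro i; simp [hρ, List.mem_filter, List.mem_range]
  have hsort : List.Pairwise (· < ·) ρ := (List.pairwise_lt_range (n := σ.length)).filter _
  have hnd : ρ.Nodup := List.Nodup.filter _ (List.nodup_range (n := σ.length))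
  have hRB : ∀ i j, RBefore ρ i j ↔ i ∈ ρ ∧ j ∈ ρ ∧ i < j := by
    intro i j
    constructor
    · rintro ⟨hi, hj, hlt⟩
      exact ⟨hi, hj, (sorted_indexOf_lt hsort hi hj).mp hlt⟩
    · rintro ⟨hi, hj, hlt⟩
      exact ⟨hi, hj, (sorted_indexOf_lt hsort hi hj).mpr hlt⟩
  have hwfe : WellFormedEvents (ρ.map (evAt σ)) := by
    intro l
    have e1 : (ρ.map (evAt σ)).filter (onLock l) =
        (ρ.filter (fun i => onLock l (evAt σ i))).map (evAt σ) := by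
      rw [List.filter_map]; rfl
    have e2 : ρ.filter (fun i => onLock l (evAt σ i)) =
        ((List.range σ.length).filter (fun i => onLock l (evAt σ i))).filter
          (fun i => decide (i ∈ S)) := by
      rw [hρ, List.filter_filter, List.filter_filter]
      exact List.filter_congr (fun a _ => Bool.and_comm _ _)
    have e3 : σ.filter (onLock l) =
        ((List.range σ.length).filter (fun i => onLock l (evAt σ i))).map (evAt σ) := by
      conv_lhs => rw [← map_evAt_range σ]
      rw [List.filter_map]; rfl
    obtain ⟨w, hwPL, hpre⟩ := hWF l
    have hLA : LockAlt l (σ.filter (onLock l)) := lockAlt_of_prefix hwPL hpre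
    rw [e3] at hLA
    rw [e1, e2]
    refine lockAlt_filter hTOc hSPc l hLA _ rfl ?_ ?_ ?_
    · exact (List.pairwise_lt_range (n := σ.length)).filter _
    · intro k hk; exact List.mem_range.mp (List.mem_filter.mp hk).1
    · intro k hkn hkl _; exact List.mem_filter.mpr ⟨List.mem_range.mpr hkn, hkl⟩
  refine ⟨hwfe, ⟨hnd, ?_, hwfe, ?_, ?_, ?_⟩, ?_⟩
  · intro i hi; exact ((hmem i).mp hi).1
  · intro i j hTOij hj
    have hj' := (hmem j).mp hj
    exact (hmem i).mpr ⟨lt_of_le_of_lt hTOij.1 hTOij.2.1, hTOc i j hTOij hj'.2⟩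
  · intro i j hi hj hne hTOij
    exact (hRB i j).mpr ⟨hi, hj, lt_of_le_of_ne hTOij.1 hne⟩
  · intro j x hread hj i
    constructor
    · rintro ⟨x', hwx, hrx, hRBij, hmax⟩
      have hxx : x' = x := Op.read.inj (hrx.2.symm.trans hread.2)
      subst hxx
      obtain ⟨hiρ, hjρ, hij⟩ := (hRB i j).mp hRBij
      obtain ⟨lw, hLW, hile⟩ := exists_lastWrite hrx hwx hij
      obtain ⟨x0, hw0, hr0, hlwj, hmax0⟩ := hLW
      have hx0 : x0 = x' := Op.read.inj (hr0.2.symm.trans hrx.2)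
      subst hx0
      have hlwS : lw ∈ S := hLWc lw j ⟨x0, hw0, hr0, hlwj, hmax0⟩ ((hmem j).mp hj).2
      have hlwρ : lw ∈ ρ := (hmem lw).mpr ⟨hw0.1, hlwS⟩
      rcases eq_or_lt_of_le hile with rfl | hlt2
      · exact ⟨x0, hw0, hr0, hlwj, hmax0⟩
      · exact absurd ⟨(hRB i lw).mpr ⟨hiρ, hlwρ, hlt2⟩,
          (hRB lw j).mpr ⟨hlwρ, hjρ, hlwj⟩⟩ (hmax lw hw0)
    · rintro ⟨x0, hw0, hr0, hij, hmax0⟩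
      have hiS : i ∈ S := hLWc i j ⟨x0, hw0, hr0, hij, hmax0⟩ ((hmem j).mp hj).2
      have hiρ : i ∈ ρ := (hmem i).mpr ⟨hw0.1, hiS⟩
      refine ⟨x0, hw0, hr0, (hRB i j).mpr ⟨hiρ, hj, hij⟩, ?_⟩
      rintro k hwk ⟨hik, hkj⟩
      exact hmax0 k ((hRB i k).mp hik).2.2 ((hRB k j).mp hkj).2.2 hwk
  · intro l a1 a2 h1 h2 hm1 hm2
    rw [hRB a1 a2]
    simp [hm1, hm2]
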